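/- Let $0 < s < n$ be integers with $s$ even, and let $U_{s/2} := \{x \in \mathbb{R}^n : x \text{ has at most } s/2 \text{ nonzero coordinates and } \|x\|_2 \le 1\}$. Then for every $0 < \delta < 1/2$, the covering number of $U_{s/2}$ by Euclidean balls of radius $\delta$ centered at points of $U_{s/2}$ satisfies $N(U_{s/2}, \delta) \ge \left(\frac{n}{2s}\right)^{s/4}$. -/

import Mathlib

open Finset Metric

/-- Counting lemma: number of k-subsets meeting a fixed k-set S in ≥ m points. -/
lemma ball_count {n k m : ℕ} (S : Finset (Fin n)) (hS : S.card = k) :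
    (((univ : Finset (Fin n)).powersetCard k).filter (fun T => m ≤ (S ∩ T).card)).card
      ≤ k.choose m * (n - m).choose (k - m) := by
  classical
  set A := ((univ : Finset (Fin n)).powersetCard k).filter (fun T => m ≤ (S ∩ T).card) with hA
  set B := (S.powersetCard m).sigma (fun M => ((univ \ M).powersetCard (k - m))) with hB
  have hBcard : B.card = k.choose m * (n - m).choose (k - m) := by
    rw [hB, Finset.card_sigma]
    have : ∀ M ∈ S.powersetCard m,
        (((univ \ M) : Finset (Fin n)).powersetCard (k - m)).card = (n - m).choose (k - m) := by
      intro M hM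
      rw [Finset.mem_powersetCard] at hM
      rw [Finset.card_powersetCard, Finset.card_sdiff_of_subset (Finset.subset_univ M), hM.2,
        Finset.card_univ, Fintype.card_fin]
    rw [Finset.sum_congr rfl this, Finset.sum_const, Finset.card_powersetCard, hS, smul_eq_mul]
  rw [← hBcard]
  -- injection T ↦ ⟨M T, T \ M T⟩
  have hex : ∀ T ∈ A, ∃ M, M ⊆ S ∩ T ∧ M.card = m := by
    intro T hT
    rw [hA, Finset.mem_filter] at hT
    exact Finset.exists_subset_card_eq hT.2
  choose! M hM1 hM2 using hex
  apply Finset.card_le_card_of_injOn (fun T => ⟨M T, T \ M T⟩)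
  · intro T hT
    have h1 := hM1 T hT
    have h2 := hM2 T hT
    have hTk : T.card = k := by
      rw [hA, Finset.mem_coe, Finset.mem_filter, Finset.mem_powersetCard] at hT
      exact hT.1.2
    have hMT : M T ⊆ T := h1.trans Finset.inter_subset_right
    rw [hB, Finset.mem_coe, Finset.mem_sigma, Finset.mem_powersetCard, Finset.mem_powersetCard]
    refine ⟨⟨h1.trans Finset.inter_subset_left, h2⟩, ?_, ?_⟩
    · intro x hx
      rw [Finset.mem_sdiff] at hx ⊢
      exact ⟨Finset.mem_univ x, hx.2⟩
    · rw [Finset.card_sdiff_of_subset hMT, hTk, h2]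
  · intro T1 h1 T2 h2 heq
    simp only [Sigma.mk.inj_iff] at heq
    have e1 : M T1 = M T2 := heq.1
    have e2 : T1 \ M T1 = T2 \ M T2 := eq_of_heq heq.2
    have hMT1 : M T1 ⊆ T1 := (hM1 T1 h1).trans Finset.inter_subset_right
    have hMT2 : M T2 ⊆ T2 := (hM1 T2 h2).trans Finset.inter_subset_right
    calc T1 = M T1 ∪ (T1 \ M T1) := (Finset.union_sdiff_of_subset hMT1).symm
    _ = M T2 ∪ (T2 \ M T2) := by rw [e2, e1]
    _ = T2 := Finset.union_sdiff_of_subset hMT2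
/-- Greedy packing: a family of k-subsets with pairwise intersections < m covering everything. -/
lemma exists_packing (n k m : ℕ) (hmk : m ≤ k) (hkn : k ≤ n) :
    ∃ P : Finset (Finset (Fin n)),
      (∀ S ∈ P, S.card = k) ∧
      (∀ S ∈ P, ∀ T ∈ P, S ≠ T → (S ∩ T).card < m) ∧
      n.choose k ≤ P.card * (k.choose m * (n - m).choose (k - m)) := by
  classical
  set good : Finset (Finset (Fin n)) → Prop :=
    fun P => (↑P ⊆ ((univ : Finset (Fin n)).powersetCard k : Set (Finset (Fin n)))) ∧
      (∀ S ∈ P, ∀ T ∈ P, S ≠ T → (S ∩ T).card < m) with hgood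
  have hne : ((univ : Finset (Finset (Finset (Fin n)))).filter good).Nonempty := by
    refine ⟨∅, ?_⟩
    simp [hgood]
  obtain ⟨P, hPmem, hPmax⟩ := Finset.exists_max_image _ Finset.card hne
  rw [Finset.mem_filter] at hPmem
  have hPgood : good P := hPmem.2
  have hPsub : ∀ S ∈ P, S.card = k := by
    intro S hS
    have h : S ∈ (univ : Finset (Fin n)).powersetCard k := Finset.mem_coe.mp (hPgood.1 hS)
    exact (Finset.mem_powersetCard.mp h).2
  refine ⟨P, hPsub, hPgood.2, ?_⟩
  -- maximality: every k-set T is m-close to some S in P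
  have hcover : ∀ T ∈ (univ : Finset (Fin n)).powersetCard k, ∃ S ∈ P, m ≤ (S ∩ T).card := by
    intro T hT
    by_contra hcon
    push_neg at hcon
    have hTnot : T ∉ P := by
      intro hTP
      have := hcon T hTP
      rw [Finset.inter_self] at this
      have hTk : T.card = k := (Finset.mem_powersetCard.mp hT).2
      omega
    have hgood' : good (insert T P) := by
      constructor
      · rw [Finset.coe_insert]
        exact Set.insert_subset (by exact_mod_cast hT) hPgood.1
      · intro S hS S' hS' hne'
        rcases Finset.mem_insert.mp hS with h | h
        · rcases Finset.mem_insert.mp hS' with h' | h'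
          · exact absurd (h.trans h'.symm) hne'
          · subst h; rw [Finset.inter_comm]; exact hcon S' h'
        · rcases Finset.mem_insert.mp hS' with h' | h'
          · subst h'; exact hcon S h
          · exact hPgood.2 S h S' h' hne'
    have hle := hPmax (insert T P) (Finset.mem_filter.mpr ⟨Finset.mem_univ _, hgood'⟩)
    rw [Finset.card_insert_of_notMem hTnot] at hle
    omega
  -- counting
  have hsub : (univ : Finset (Fin n)).powersetCard k ⊆
      P.biUnion (fun S => ((univ : Finset (Fin n)).powersetCard k).filter
        (fun T => m ≤ (S ∩ T).card)) := by
    intro T hT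
    obtain ⟨S, hSP, hST⟩ := hcover T hT
    exact Finset.mem_biUnion.mpr ⟨S, hSP, Finset.mem_filter.mpr ⟨hT, hST⟩⟩
  have h1 : ((univ : Finset (Fin n)).powersetCard k).card ≤
      ∑ S ∈ P, (((univ : Finset (Fin n)).powersetCard k).filter
        (fun T => m ≤ (S ∩ T).card)).card :=
    le_trans (Finset.card_le_card hsub) (Finset.card_biUnion_le)
  have h2 : ∑ S ∈ P, (((univ : Finset (Fin n)).powersetCard k).filter
        (fun T => m ≤ (S ∩ T).card)).card ≤ P.card * (k.choose m * (n - m).choose (k - m)) := by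
    rw [← smul_eq_mul, ← Finset.sum_const]
    exact Finset.sum_le_sum (fun S hS => ball_count S (hPsub S hS))
  have h3 : ((univ : Finset (Fin n)).powersetCard k).card = n.choose k := by
    rw [Finset.card_powersetCard, Finset.card_univ, Fintype.card_fin]
  omega
lemma pow_mul_choose_le {n k m : ℕ} (hkn : k ≤ n) :
    n ^ m * k.choose m ≤ k ^ m * n.choose m := by
  have key : n ^ m * k.descFactorial m ≤ k ^ m * n.descFactorial m := by
    rw [Nat.descFactorial_eq_prod_range, Nat.descFactorial_eq_prod_range,
      show n ^ m = ∏ _i ∈ range m, n by simp, show k ^ m = ∏ _i ∈ range m, k by simp,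
      ← Finset.prod_mul_distrib, ← Finset.prod_mul_distrib]
    apply Finset.prod_le_prod'
    intro i _
    rcases le_or_gt i k with hik | hik
    · have hin : i ≤ n := hik.trans hkn
      zify [hik, hin]
      nlinarith [Nat.mul_le_mul_right i hkn, (Nat.zero_le (k*i) : 0 ≤ k*i)]
    · rw [Nat.sub_eq_zero_of_le hik.le]
      simp
  rw [Nat.descFactorial_eq_factorial_mul_choose, Nat.descFactorial_eq_factorial_mul_choose]
      at key
  have hpos : 0 < Nat.factorial m := Nat.factorial_pos m
  have key2 : Nat.factorial m * (n ^ m * k.choose m)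
      ≤ Nat.factorial m * (k ^ m * n.choose m) := by
    calc Nat.factorial m * (n ^ m * k.choose m)
        = n ^ m * (Nat.factorial m * k.choose m) := by ring
      _ ≤ k ^ m * (Nat.factorial m * n.choose m) := key
      _ = Nat.factorial m * (k ^ m * n.choose m) := by ring
  exact Nat.le_of_mul_le_mul_left key2 hpos

lemma choose_le_two_pow' (k m : ℕ) (h : m ≤ k) : k.choose m ≤ 2 ^ k := by
  calc k.choose m ≤ ∑ j ∈ Finset.range (k+1), k.choose j :=
        Finset.single_le_sum (fun j _ => Nat.zero_le _) (Finset.mem_range.mpr (by omega))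
    _ = 2 ^ k := Nat.sum_range_choose k

/-- The key numeric inequality. -/
lemma numeric_bound (n k : ℕ) (hk : 1 ≤ k) (hkn : k ≤ n) :
    ((n : ℝ) / (4 * k)) ^ ((k : ℝ) / 2) * ((k.choose (k/2+1) : ℝ)) ^ 2
      ≤ (n.choose (k/2+1) : ℝ) := by
  set m : ℕ := k / 2 + 1 with hm
  have hmk : m ≤ k := by omega
  have hkpos : (0 : ℝ) < k := by exact_mod_cast hk
  have hnk1 : (1 : ℝ) ≤ (n : ℝ) / k := by
    rw [le_div_iff₀ hkpos, one_mul]; exact_mod_cast hkn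
  have hb1 : (0:ℝ) ≤ (n:ℝ)/k := by positivity
  have h4 : ((n : ℝ) / (4 * k)) = ((n : ℝ) / k) * (4 : ℝ)⁻¹ := by
    rw [mul_comm (4:ℝ), ← div_div, div_eq_mul_inv ((n:ℝ)/k)]
  have h42 : (4:ℝ)⁻¹ = (2:ℝ) ^ (-2 : ℝ) := by
    rw [show (-2:ℝ) = ((-2 : ℤ) : ℝ) by norm_num, Real.rpow_intCast]; norm_num
  have step1 : ((n : ℝ) / (4 * k)) ^ ((k : ℝ) / 2)
      = ((n : ℝ) / k) ^ ((k : ℝ) / 2) * ((2:ℝ) ^ (k:ℕ))⁻¹ := by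
    rw [h4, Real.mul_rpow hb1 (by positivity)]
    congr 1
    rw [h42, ← Real.rpow_mul (by norm_num : (0:ℝ) ≤ 2),
      show (-2:ℝ) * ((k:ℝ)/2) = -(k:ℝ) by ring,
      Real.rpow_neg (by norm_num), Real.rpow_natCast]
  set a := ((n:ℝ)/k) ^ ((k:ℝ)/2) with ha
  set b := ((2:ℝ) ^ (k:ℕ)) with hbb
  set c := ((k.choose m : ℝ)) with hc
  set d := ((n:ℝ)/k) ^ (m:ℝ) with hd
  have hbpos : (0:ℝ) < b := by positivity
  have hcpos : (0:ℝ) < c := by rw [hc]; exact_mod_cast Nat.choose_pos hmk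
  have hcb : c ≤ b := by rw [hc, hbb]; exact_mod_cast choose_le_two_pow' k m hmk
  have had : a ≤ d := by
    apply Real.rpow_le_rpow_of_exponent_le hnk1
    have h2 : (k:ℝ) ≤ 2 * ((k/2 : ℕ) : ℝ) + 2 := by exact_mod_cast (by omega : k ≤ 2*(k/2)+2)
    have hm' : (m:ℝ) = ((k/2 : ℕ):ℝ) + 1 := by rw [hm, Nat.cast_add, Nat.cast_one]
    push_cast
    linarith
  have hapos : (0:ℝ) ≤ a := by positivity
  have hdc : d * c ≤ (n.choose m : ℝ) := by
    rw [hd, Real.rpow_natCast, div_pow, hc, div_mul_eq_mul_div, div_le_iff₀ (by positivity)]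
    calc ((n:ℝ)^m * (k.choose m : ℝ)) = ((n^m * k.choose m : ℕ) : ℝ) := by push_cast; ring
      _ ≤ ((k^m * n.choose m : ℕ) : ℝ) := by exact_mod_cast pow_mul_choose_le hkn
      _ = (n.choose m : ℝ) * (k:ℝ)^m := by push_cast; ring
  rw [step1]
  calc a * b⁻¹ * c ^ 2 = (a * c) * (c * b⁻¹) := by ring
    _ ≤ (a * c) * 1 := by
        apply mul_le_mul_of_nonneg_left _ (by positivity)
        rw [← div_eq_mul_inv]
        exact (div_le_one hbpos).mpr hcb
    _ = a * c := mul_one _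
    _ ≤ d * c := mul_le_mul_of_nonneg_right had hcpos.le
    _ ≤ (n.choose m : ℝ) := hdc
noncomputable def vec (n k : ℕ) (S : Finset (Fin n)) : EuclideanSpace ℝ (Fin n) :=
  WithLp.toLp 2 (fun i => if i ∈ S then (Real.sqrt k)⁻¹ else 0)

lemma vec_apply (n k : ℕ) (S : Finset (Fin n)) (i : Fin n) :
    vec n k S i = if i ∈ S then (Real.sqrt k)⁻¹ else 0 := rfl

lemma vec_support (n k : ℕ) (hk : 1 ≤ k) (S : Finset (Fin n)) :
    {i : Fin n | vec n k S i ≠ 0} = ↑S := by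
  ext i
  simp only [Set.mem_setOf_eq, vec_apply, Finset.coe_insert, Finset.mem_coe]
  have hne : (Real.sqrt k)⁻¹ ≠ 0 := by
    have : (0:ℝ) < Real.sqrt k := Real.sqrt_pos.mpr (by exact_mod_cast hk)
    positivity
  by_cases h : i ∈ S <;> simp [h, hne]

lemma vec_norm (n k : ℕ) (hk : 1 ≤ k) (S : Finset (Fin n)) (hS : S.card = k) :
    ‖vec n k S‖ = 1 := by
  have hkpos : (0:ℝ) < k := by exact_mod_cast hk
  rw [EuclideanSpace.norm_eq]
  have : ∀ i : Fin n, ‖vec n k S i‖ ^ 2 = if i ∈ S then (k:ℝ)⁻¹ else 0 := by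
    intro i
    rw [vec_apply]
    by_cases h : i ∈ S <;> simp [h]
  rw [Finset.sum_congr rfl (fun i _ => this i), Finset.sum_ite_mem, Finset.univ_inter,
    Finset.sum_const, hS, nsmul_eq_mul, mul_inv_cancel₀ (ne_of_gt hkpos), Real.sqrt_one]

lemma vec_dist (n k : ℕ) (hk : 1 ≤ k) (S T : Finset (Fin n))
    (hS : S.card = k) (hT : T.card = k) (hST : (S ∩ T).card ≤ k / 2) :
    1 ≤ dist (vec n k S) (vec n k T) := by
  have hkpos : (0:ℝ) < k := by exact_mod_cast hk
  rw [EuclideanSpace.dist_eq]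
  rw [show (1:ℝ) = Real.sqrt 1 from Real.sqrt_one.symm]
  apply Real.sqrt_le_sqrt
  have hpt : ∀ i : Fin n, (dist (vec n k S i) (vec n k T i)) ^ 2
      = if i ∈ (S \ T) ∪ (T \ S) then (k:ℝ)⁻¹ else 0 := by
    intro i
    rw [Real.dist_eq, sq_abs, vec_apply, vec_apply]
    by_cases h1 : i ∈ S <;> by_cases h2 : i ∈ T <;>
      simp [h1, h2, Finset.mem_union, Finset.mem_sdiff]
  rw [Finset.sum_congr rfl (fun i _ => hpt i), Finset.sum_ite_mem, Finset.univ_inter,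
    Finset.sum_const, nsmul_eq_mul]
  have hcard : k ≤ ((S \ T) ∪ (T \ S)).card := by
    have hd : Disjoint (S \ T) (T \ S) := by
      apply Finset.disjoint_left.mpr
      intro a ha hb
      rw [Finset.mem_sdiff] at ha hb
      exact hb.2 ha.1
    rw [Finset.card_union_of_disjoint hd]
    have h1 : (S ∩ T).card + (S \ T).card = k := by rw [Finset.card_inter_add_card_sdiff, hS]
    have h2 : (T ∩ S).card + (T \ S).card = k := by rw [Finset.card_inter_add_card_sdiff, hT]
    rw [Finset.inter_comm] at h2
    omega
  calc (1:ℝ) = (k:ℝ) * (k:ℝ)⁻¹ := by rw [mul_inv_cancel₀ (ne_of_gt hkpos)]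
    _ ≤ (((S \ T) ∪ (T \ S)).card : ℝ) * (k:ℝ)⁻¹ := by
        apply mul_le_mul_of_nonneg_right _ (by positivity)
        exact_mod_cast hcard
lemma sparse_set_compact (n K : ℕ) :
    IsCompact {x : EuclideanSpace ℝ (Fin n) | {i : Fin n | x i ≠ 0}.ncard ≤ K ∧ ‖x‖ ≤ 1} := by
  set T := {x : EuclideanSpace ℝ (Fin n) | {i : Fin n | x i ≠ 0}.ncard ≤ K ∧ ‖x‖ ≤ 1} with hT
  have hA : {x : EuclideanSpace ℝ (Fin n) | {i : Fin n | x i ≠ 0}.ncard ≤ K}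
      = ⋃ S ∈ {S : Finset (Fin n) | S.card ≤ K},
          {x : EuclideanSpace ℝ (Fin n) | ∀ i, i ∉ S → x i = 0} := by
    ext x
    simp only [Set.mem_setOf_eq, Set.mem_iUnion]
    constructor
    · intro h
      have hfin : {i : Fin n | x i ≠ 0}.Finite := Set.toFinite _
      refine ⟨hfin.toFinset, ?_, ?_⟩
      · rwa [Set.ncard_eq_toFinset_card _ hfin] at h
      · intro i hi
        by_contra hxi
        exact hi (hfin.mem_toFinset.mpr hxi)
    · rintro ⟨S, hSK, hx⟩
      have hsub : {i : Fin n | x i ≠ 0} ⊆ ↑S := by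
        intro i hi
        by_contra hc
        exact hi (hx i hc)
      calc {i : Fin n | x i ≠ 0}.ncard ≤ (↑S : Set (Fin n)).ncard :=
            Set.ncard_le_ncard hsub (Set.toFinite _)
        _ = S.card := Set.ncard_coe_finset S
        _ ≤ K := hSK
  have hclosedA : IsClosed {x : EuclideanSpace ℝ (Fin n) | {i : Fin n | x i ≠ 0}.ncard ≤ K} := by
    rw [hA]
    apply Set.Finite.isClosed_biUnion (Set.toFinite _)
    intro S _
    have : {x : EuclideanSpace ℝ (Fin n) | ∀ i, i ∉ S → x i = 0}
        = ⋂ (i : Fin n) (_ : i ∉ S), {x : EuclideanSpace ℝ (Fin n) | x i = 0} := by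
      ext x; simp
    rw [this]
    refine isClosed_iInter fun i => isClosed_iInter fun _ => ?_
    have hc : Continuous fun x : EuclideanSpace ℝ (Fin n) => x i :=
      (EuclideanSpace.proj (𝕜 := ℝ) i).continuous
    exact isClosed_eq hc continuous_const
  have hTc : IsClosed T := by
    have : T = {x : EuclideanSpace ℝ (Fin n) | {i : Fin n | x i ≠ 0}.ncard ≤ K}
        ∩ Metric.closedBall 0 1 := by
      ext x
      simp [hT, Set.mem_setOf_eq, mem_closedBall_zero_iff]
    rw [this]
    exact hclosedA.inter Metric.isClosed_closedBall
  apply IsCompact.of_isClosed_subset (isCompact_closedBall (0 : EuclideanSpace ℝ (Fin n)) 1) hTc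
  intro x hx
  rw [mem_closedBall_zero_iff]
  exact hx.2

lemma cover_exists (n K : ℕ) (δ : ℝ) (hδ : 0 < δ) :
    {N : ℕ | ∃ F : Finset (EuclideanSpace ℝ (Fin n)),
      ↑F ⊆ {x : EuclideanSpace ℝ (Fin n) | {i : Fin n | x i ≠ 0}.ncard ≤ K ∧ ‖x‖ ≤ 1} ∧
      {x : EuclideanSpace ℝ (Fin n) | {i : Fin n | x i ≠ 0}.ncard ≤ K ∧ ‖x‖ ≤ 1}
        ⊆ (⋃ x ∈ F, Metric.closedBall x δ) ∧ F.card = N}.Nonempty := by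
  classical
  set T := {x : EuclideanSpace ℝ (Fin n) | {i : Fin n | x i ≠ 0}.ncard ≤ K ∧ ‖x‖ ≤ 1} with hT
  have hcomp := sparse_set_compact n K
  have hcover : T ⊆ ⋃ x ∈ T, Metric.ball x δ := by
    intro x hx
    exact Set.mem_biUnion hx (Metric.mem_ball_self hδ)
  obtain ⟨b, hbT, hbfin, hbcov⟩ :=
    hcomp.elim_finite_subcover_image (fun x _ => Metric.isOpen_ball) hcover
  refine ⟨hbfin.toFinset.card, hbfin.toFinset, ?_, ?_, rfl⟩
  · rw [Set.Finite.coe_toFinset]; exact hbT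
  · intro x hx
    obtain ⟨y, hy, hxy⟩ := Set.mem_iUnion₂.mp (hbcov hx)
    exact Set.mem_iUnion₂.mpr ⟨y, hbfin.mem_toFinset.mpr hy, Metric.ball_subset_closedBall hxy⟩

/-- The covering number `N(T, δ)`: the minimal number of closed balls of radius `δ`
centered at points of `T` needed to cover `T`. -/
noncomputable def coveringNumber {E : Type*} [PseudoMetricSpace E] (T : Set E) (δ : ℝ) : ℕ :=
  sInf {k : ℕ | ∃ F : Finset E, ↑F ⊆ T ∧ T ⊆ (⋃ x ∈ F, Metric.closedBall x δ) ∧ F.card = k}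

/-- Covering number lower bound for the set of `(s/2)`-sparse vectors of norm at most one:
for every `0 < δ < 1/2`, `N(U_{s/2}, δ) ≥ (n/2s)^{s/4}`. -/

theorem sparse_vectors_covering_number_lower_bound
    (s n : ℕ) (hs : 0 < s) (hsn : s < n) (hse : Even s) (δ : ℝ) (hδ0 : 0 < δ)
    (hδ : δ < 1 / 2) :
    ((n : ℝ) / (2 * s)) ^ ((s : ℝ) / 4) ≤
      (coveringNumber {x : EuclideanSpace ℝ (Fin n) |
        {i : Fin n | x i ≠ 0}.ncard ≤ s / 2 ∧ ‖x‖ ≤ 1} δ : ℝ) := by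
  classical
  obtain ⟨k, hk2⟩ := hse
  have hsk : s / 2 = k := by omega
  have hk1 : 1 ≤ k := by omega
  have hkn : k ≤ n := by omega
  set m : ℕ := k / 2 + 1 with hm
  have hmk : m ≤ k := by omega
  obtain ⟨P, hPk, hPint, hPcount⟩ := exists_packing n k m hmk hkn
  set T := {x : EuclideanSpace ℝ (Fin n) |
      {i : Fin n | x i ≠ 0}.ncard ≤ s / 2 ∧ ‖x‖ ≤ 1} with hTdef
  have hmem : coveringNumber T δ ∈ {N : ℕ | ∃ F : Finset (EuclideanSpace ℝ (Fin n)),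
      ↑F ⊆ T ∧ T ⊆ (⋃ x ∈ F, Metric.closedBall x δ) ∧ F.card = N} := by
    rw [_root_.coveringNumber]
    exact Nat.sInf_mem (cover_exists n (s/2) δ hδ0)
  obtain ⟨F, hFT, hTF, hFcard⟩ := hmem
  -- the packing vectors lie in T
  have hvmem : ∀ S ∈ P, vec n k S ∈ T := by
    intro S hS
    constructor
    · rw [vec_support n k hk1 S, Set.ncard_coe_finset, hPk S hS, hsk]
    · exact (vec_norm n k hk1 S (hPk S hS)).le
  -- injection into the covering centers
  have key : P.card ≤ F.card := by
    have hex : ∀ S : Finset (Fin n), ∃ y, S ∈ P →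
        (y ∈ F ∧ dist (vec n k S) y ≤ δ) := by
      intro S
      by_cases hS : S ∈ P
      · obtain ⟨y, hy1, hy2⟩ := Set.mem_iUnion₂.mp (hTF (hvmem S hS))
        exact ⟨y, fun _ => ⟨hy1, by rwa [Metric.mem_closedBall] at hy2⟩⟩
      · exact ⟨0, fun h => absurd h hS⟩
    choose f hf using hex
    by_contra hlt
    push_neg at hlt
    obtain ⟨S1, hS1, S2, hS2, hne12, hfeq⟩ :=
      Finset.exists_ne_map_eq_of_card_lt_of_maps_to hlt (fun S hS => (hf S hS).1)
    have hd1 := (hf S1 hS1).2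
    have hd2 := (hf S2 hS2).2
    have hdist : dist (vec n k S1) (vec n k S2) ≤ 2 * δ := by
      calc dist (vec n k S1) (vec n k S2)
          ≤ dist (vec n k S1) (f S1) + dist (f S1) (vec n k S2) := dist_triangle _ _ _
        _ = dist (vec n k S1) (f S1) + dist (vec n k S2) (f S2) := by
            rw [hfeq, dist_comm (f S2) (vec n k S2)]
        _ ≤ 2 * δ := by linarith
    have h1 : (1:ℝ) ≤ dist (vec n k S1) (vec n k S2) := by
      apply vec_dist n k hk1 S1 S2 (hPk _ hS1) (hPk _ hS2)
      have := hPint S1 hS1 S2 hS2 hne12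
      omega
    linarith
  -- numeric chain
  have hchoose : n.choose m ≤ P.card * (k.choose m)^2 := by
    have hid := Nat.choose_mul (n := n) hmk
    have hstep : n.choose m * (n-m).choose (k-m)
        ≤ (P.card * (k.choose m)^2) * (n-m).choose (k-m) := by
      calc n.choose m * (n-m).choose (k-m) = n.choose k * k.choose m := hid.symm
        _ ≤ (P.card * (k.choose m * (n - m).choose (k - m))) * k.choose m :=
            Nat.mul_le_mul_right _ hPcount
        _ = (P.card * (k.choose m)^2) * (n-m).choose (k-m) := by ring
    have hpos : 0 < (n-m).choose (k-m) := Nat.choose_pos (by omega)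
    exact Nat.le_of_mul_le_mul_right hstep hpos
  have hnum := numeric_bound n k hk1 hkn
  have hc2pos : (0:ℝ) < ((k.choose m : ℝ))^2 := by
    have : 0 < k.choose m := Nat.choose_pos hmk
    positivity
  have hPreal : ((n : ℝ) / (4 * k)) ^ ((k : ℝ) / 2) ≤ (P.card : ℝ) := by
    rw [← mul_le_mul_iff_left₀ hc2pos]
    calc ((n : ℝ) / (4 * k)) ^ ((k : ℝ) / 2) * ((k.choose m : ℝ))^2
        ≤ (n.choose m : ℝ) := hnum
      _ ≤ (P.card : ℝ) * ((k.choose m : ℝ))^2 := by exact_mod_cast hchoose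
  have hrw1 : ((n : ℝ) / (2 * s)) = ((n : ℝ) / (4 * k)) := by
    have h2 : s = 2 * k := by omega
    have : (s:ℝ) = 2 * k := by exact_mod_cast h2
    rw [this]; ring_nf
  have hrw2 : ((s : ℝ) / 4) = ((k : ℝ) / 2) := by
    have h2 : s = 2 * k := by omega
    have : (s:ℝ) = 2 * k := by exact_mod_cast h2
    rw [this]; ring
  rw [hrw1, hrw2]
  calc ((n : ℝ) / (4 * k)) ^ ((k : ℝ) / 2) ≤ (P.card : ℝ) := hPreal
    _ ≤ (F.card : ℝ) := by exact_mod_cast key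
    _ = (coveringNumber T δ : ℝ) := by rw [hFcard]
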